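/- (Greenberg) Let F be a free group of finite rank, let H be a finitely generated subgroup of F, and let K and L be subgroups of F with H ≤ K and H ≤ L such that H has finite index in K and H has finite index in L. Then H has finite index in the subgroup K ⊔ L generated by K and L. -/

import Mathlib

namespace Greenberg
open FreeGroup List

variable {α : Type*} [DecidableEq α]

/-- Reduced words: no adjacent cancelling pair. -/
def IsRed (w : List (α × Bool)) : Prop :=
  w.Chain' (fun p q => ¬(p.1 = q.1 ∧ p.2 = !q.2))

theorem isRed_reduce (w : List (α × Bool)) : IsRed (reduce w) := by
  unfold IsRed
  induction w with
  | nil => exact List.isChain_nil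
  | cons p w ih =>
    rw [reduce.cons]
    rcases h : reduce w with _ | ⟨q, t⟩
    · exact List.isChain_singleton _
    · rw [h] at ih
      show Chain' (fun p q => ¬(p.1 = q.1 ∧ p.2 = !q.2))
        (if p.1 = q.1 ∧ p.2 = !q.2 then t else p :: q :: t)
      by_cases hc : p.1 = q.1 ∧ p.2 = !q.2
      · rw [if_pos hc]; exact ih.tail
      · rw [if_neg hc]; exact List.isChain_cons_cons.2 ⟨hc, ih⟩

theorem IsRed.reduce_eq {w : List (α × Bool)} (h : IsRed w) : reduce w = w := by
  unfold IsRed at h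
  induction w with
  | nil => rfl
  | cons p w ih =>
    rw [reduce.cons, ih h.tail]
    rcases w with _ | ⟨q, t⟩
    · rfl
    · have : ¬(p.1 = q.1 ∧ p.2 = !q.2) := (List.isChain_cons_cons.1 h).1
      simp [this]

theorem isRed_toWord (x : FreeGroup α) : IsRed x.toWord := by
  have := isRed_reduce x.toWord
  rwa [reduce_toWord] at this

theorem toWord_mk_self {w : List (α × Bool)} (h : IsRed w) : (mk w).toWord = w := by
  rw [FreeGroup.toWord_mk]; exact h.reduce_eq

omit [DecidableEq α] in
theorem invRev_append (a b : List (α × Bool)) :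
    invRev (a ++ b) = invRev b ++ invRev a := by
  simp [invRev]

omit [DecidableEq α] in
theorem invRev_singleton (p : α × Bool) : invRev [p] = [(p.1, !p.2)] := by
  simp [invRev]

omit [DecidableEq α] in
theorem isRed_append {a b : List (α × Bool)} (ha : IsRed a) (hb : IsRed b)
    (hab : ∀ x ∈ a.getLast?, ∀ y ∈ b.head?, ¬(x.1 = y.1 ∧ x.2 = !y.2)) :
    IsRed (a ++ b) :=
  List.isChain_append.2 ⟨ha, hb, hab⟩

/-- The cancellation lemma for products of reduced words. -/
theorem exists_cancel (x y : FreeGroup α) :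
    ∃ a b c, x.toWord = a ++ b ∧ y.toWord = invRev b ++ c ∧ (x * y).toWord = a ++ c := by
  generalize hn : x.toWord.length = n
  induction n using Nat.strong_induction_on generalizing x y with
  | _ n ih =>
  rcases List.eq_nil_or_concat x.toWord with hx0 | ⟨w1, ℓ, hx0⟩
  · refine ⟨[], [], y.toWord, by simp [hx0], by simp [invRev], ?_⟩
    have : x = 1 := toWord_eq_nil_iff.1 hx0
    simp [this]
  · have hx : x.toWord = w1 ++ [ℓ] := by simpa using hx0
    by_cases hynil : y.toWord = []
    · refine ⟨x.toWord, [], [], by simp, by simp [invRev, hynil], ?_⟩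
      have : y = 1 := toWord_eq_nil_iff.1 hynil
      simp [this]
    · obtain ⟨ℓ', t, hy⟩ := List.exists_cons_of_ne_nil hynil
      by_cases hc : ℓ'.1 = ℓ.1 ∧ ℓ'.2 = !ℓ.2
      · -- cancellation case
        have hℓ' : ℓ' = (ℓ.1, !ℓ.2) := Prod.ext hc.1 hc.2
        have hxw : x = mk w1 * mk [ℓ] := by
          rw [mul_mk]; conv_lhs => rw [← mk_toWord (x := x), hx]
        have hyw : y = mk [ℓ'] * mk t := by
          rw [mul_mk]; conv_lhs => rw [← mk_toWord (x := y), hy]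
          rfl
        have hred1 : IsRed w1 := (isRed_toWord x).prefix (by rw [hx]; exact ⟨[ℓ], rfl⟩)
        have hredt : IsRed t := (isRed_toWord y).suffix (by rw [hy]; exact ⟨[ℓ'], rfl⟩)
        have hxy : x * y = mk w1 * mk t := by
          rw [hxw, hyw, mul_assoc, ← mul_assoc (mk [ℓ]), mul_mk]
          have h1 : mk ([ℓ] ++ [ℓ']) = (1 : FreeGroup α) := by
            have h2 : ([ℓ] ++ [ℓ'] : List (α × Bool)) = [] ++ (ℓ.1, ℓ.2)::(ℓ.1, !ℓ.2)::[] := by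
              rw [hℓ']; simp
            rw [h2]
            exact (Quot.sound (Red.Step.not)).trans rfl
          rw [h1, one_mul]
        have hw1 : (mk w1).toWord = w1 := toWord_mk_self hred1
        have htt : (mk t).toWord = t := toWord_mk_self hredt
        have hlen : (mk w1).toWord.length < n := by
          rw [hw1, ← hn, hx]; simp
        obtain ⟨a, b, c, h1, h2, h3⟩ := ih _ hlen (mk w1) (mk t) rfl
        rw [hw1] at h1; rw [htt] at h2
        refine ⟨a, b ++ [ℓ], c, ?_, ?_, ?_⟩
        · rw [hx, h1, List.append_assoc]
        · rw [hy, invRev_append, invRev_singleton, h2, hℓ']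
          simp
        · rw [hxy, h3]
      · -- no cancellation: concatenation is reduced
        have hred : IsRed (x.toWord ++ y.toWord) := by
          refine isRed_append (isRed_toWord x) (isRed_toWord y) ?_
          intro p hp q hq
          rw [hx] at hp; rw [hy] at hq
          simp only [List.head?_cons, Option.mem_def, Option.some_inj] at hq
          simp only [Option.mem_def] at hp
          rw [List.getLast?_concat] at hp
          have hp' : p = ℓ := Option.some_inj.1 hp.symm
          subst hp'; subst hq
          rintro ⟨h1, h2⟩
          exact hc ⟨h1.symm, by simp [h2]⟩
        refine ⟨x.toWord, [], y.toWord, by simp, by rw [invRev_empty, List.nil_append], ?_⟩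
        have hmm : x * y = mk (x.toWord ++ y.toWord) := by
          rw [← mul_mk, mk_toWord, mk_toWord]
        rw [hmm, toWord_mk_self hred]
omit [DecidableEq α] in
theorem isRed_invRev {w : List (α × Bool)} (h : IsRed w) : IsRed (invRev w) := by
  unfold IsRed invRev List.Chain' at *
  rw [List.isChain_reverse, List.isChain_map]
  refine h.imp ?_
  rintro ⟨xa, xb⟩ ⟨ya, yb⟩ hxy ⟨h1, h2⟩
  exact hxy ⟨h1.symm, by revert h2; cases xb <;> cases yb <;> simp⟩

/-- concatenated power of a word -/
def wpow (c : List (α × Bool)) (s : ℕ) : List (α × Bool) :=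
  (List.replicate s c).flatten

omit [DecidableEq α] in
theorem wpow_zero (c : List (α × Bool)) : wpow c 0 = [] := rfl

omit [DecidableEq α] in
theorem wpow_succ (c : List (α × Bool)) (s : ℕ) : wpow c (s + 1) = c ++ wpow c s := by
  unfold wpow; rw [List.replicate_succ, List.flatten_cons]

omit [DecidableEq α] in
theorem wpow_succ' (c : List (α × Bool)) (s : ℕ) : wpow c (s + 1) = wpow c s ++ c := by
  unfold wpow; rw [List.replicate_succ', List.flatten_append]; simp

omit [DecidableEq α] in
theorem length_wpow (c : List (α × Bool)) (s : ℕ) : (wpow c s).length = s * c.length := by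
  induction s with
  | zero => simp [wpow_zero]
  | succ s ih => rw [wpow_succ, List.length_append, ih]; ring

omit [DecidableEq α] in
theorem head?_wpow {c : List (α × Bool)} (hc : c ≠ []) {s : ℕ} (hs : 1 ≤ s) :
    (wpow c s).head? = c.head? := by
  obtain ⟨s', rfl⟩ : ∃ s', s = s' + 1 := ⟨s - 1, by omega⟩
  rw [wpow_succ, List.head?_append_of_ne_nil _ hc]

omit [DecidableEq α] in
theorem getLast?_wpow {c : List (α × Bool)} (hc : c ≠ []) {s : ℕ} (hs : 1 ≤ s) :
    (wpow c s).getLast? = c.getLast? := by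
  obtain ⟨s', rfl⟩ : ∃ s', s = s' + 1 := ⟨s - 1, by omega⟩
  rw [wpow_succ', List.getLast?_append_of_ne_nil _ hc]

omit [DecidableEq α] in
theorem wpow_ne_nil {c : List (α × Bool)} (hc : c ≠ []) {s : ℕ} (hs : 1 ≤ s) :
    wpow c s ≠ [] := by
  obtain ⟨s', rfl⟩ : ∃ s', s = s' + 1 := ⟨s - 1, by omega⟩
  rw [wpow_succ]; simp [hc]

omit [DecidableEq α] in
theorem take_wpow {c : List (α × Bool)} {s : ℕ} (hs : 1 ≤ s) :
    (wpow c s).take c.length = c := by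
  obtain ⟨s', rfl⟩ : ∃ s', s = s' + 1 := ⟨s - 1, by omega⟩
  rw [wpow_succ, List.take_left]


/-- Every nonempty reduced word is of the form `u ++ c ++ invRev u` with `c` cyclically
reduced (i.e. `c ++ c` is reduced) and nonempty. -/
theorem exists_cyc : ∀ (w : List (α × Bool)), IsRed w → w ≠ [] →
    ∃ u c, w = u ++ c ++ invRev u ∧ c ≠ [] ∧ IsRed (c ++ c) := by
  intro w
  generalize hn : w.length = n
  induction n using Nat.strong_induction_on generalizing w with
  | _ n ih =>
  intro hw hne
  rcases w with _ | ⟨x, t⟩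
  · exact absurd rfl hne
  rcases List.eq_nil_or_concat t with rfl | ⟨mid, y, hty⟩
  · refine ⟨[], [x], by simp [invRev], by simp, ?_⟩
    refine List.isChain_cons_cons.2 ⟨?_, List.isChain_singleton _⟩
    rintro ⟨-, h2⟩
    exact (Bool.eq_not_self x.2).1 h2
  · have hty' : t = mid ++ [y] := by simpa using hty
    subst hty'
    by_cases hc : y.1 = x.1 ∧ y.2 = !x.2
    · -- peel off the cancelling pair
      have hy : y = (x.1, !x.2) := Prod.ext hc.1 hc.2
      have hmidne : mid ≠ [] := by
        rintro rfl
        have h1 : ¬(x.1 = y.1 ∧ x.2 = !y.2) := by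
          have := List.isChain_cons_cons.1 hw
          simpa using this.1
        exact h1 ⟨hc.1.symm, by rw [hc.2, Bool.not_not]⟩
      have hmidred : IsRed mid := hw.infix ⟨[x], [y], by simp⟩
      have hlen : mid.length < n := by rw [← hn]; simp <;> omega
      obtain ⟨u, c, hmid, hcne, hcc⟩ := ih _ hlen mid rfl hmidred hmidne
      refine ⟨x :: u, c, ?_, hcne, hcc⟩
      have hinv : invRev (x :: u) = invRev u ++ [y] := by
        rw [show (x :: u) = [x] ++ u from rfl, invRev_append, invRev_singleton, ← hy]
      rw [hinv, hmid]
      simp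
    · -- w is already cyclically reduced
      refine ⟨[], x :: (mid ++ [y]), by simp [invRev], by simp, ?_⟩
      refine isRed_append hw hw ?_
      intro a ha b hb
      simp only [List.head?_cons, Option.mem_def, Option.some_inj] at hb
      have ha' : a = y := by
        rw [show x :: (mid ++ [y]) = (x :: mid) ++ [y] by simp, List.getLast?_concat] at ha
        exact Option.some_inj.1 ha.symm
      subst ha'; subst hb
      exact hc

theorem isRed_cat_wpow {c : List (α × Bool)} (hcc : IsRed (c ++ c)) (hc : c ≠ []) :
    ∀ s, IsRed (c ++ wpow c s)
  | 0 => by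
      rw [wpow_zero, List.append_nil]
      exact hcc.prefix ⟨c, rfl⟩
  | (s+1) => by
      rw [wpow_succ]
      refine isRed_append (hcc.prefix ⟨c, rfl⟩) (isRed_cat_wpow hcc hc s) ?_
      intro a ha b hb
      rw [List.head?_append_of_ne_nil _ hc] at hb
      exact (List.isChain_append.1 hcc).2.2 a ha b hb

theorem isRed_wpow {c : List (α × Bool)} (hcc : IsRed (c ++ c)) (hc : c ≠ []) (s : ℕ) :
    IsRed (wpow c s) :=
  (isRed_cat_wpow hcc hc s).suffix ⟨c, rfl⟩

theorem isRed_conjpow {u c : List (α × Bool)} (h : IsRed (u ++ c ++ invRev u))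
    (hcc : IsRed (c ++ c)) (hc : c ≠ []) {s : ℕ} (hs : 1 ≤ s) :
    IsRed (u ++ wpow c s ++ invRev u) := by
  obtain ⟨h1, h2, h3⟩ := List.isChain_append.1 h
  obtain ⟨h4, h5, h6⟩ := List.isChain_append.1 h1
  refine isRed_append (isRed_append h4 (isRed_wpow hcc hc s) ?_) h2 ?_
  · intro a ha b hb
    rw [head?_wpow hc hs] at hb
    exact h6 a ha b hb
  · intro a ha b hb
    rw [List.getLast?_append_of_ne_nil _ (wpow_ne_nil hc hs), getLast?_wpow hc hs] at ha
    refine h3 a ?_ b hb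
    rw [List.getLast?_append_of_ne_nil _ hc]
    exact ha

theorem toWord_mk_pow {c : List (α × Bool)} (hcc : IsRed (c ++ c)) (hc : c ≠ []) :
    ∀ s, ((mk c : FreeGroup α) ^ s).toWord = wpow c s
  | 0 => by rw [pow_zero, toWord_one, wpow_zero]
  | (s+1) => by
      have hmk : (mk c : FreeGroup α) ^ s = mk (wpow c s) := by
        rw [← mk_toWord (x := (mk c : FreeGroup α) ^ s), toWord_mk_pow hcc hc s]
      rw [pow_succ', hmk, mul_mk, wpow_succ]
      exact toWord_mk_self (isRed_cat_wpow hcc hc s)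

theorem toWord_conjpow {u c : List (α × Bool)} (h : IsRed (u ++ c ++ invRev u))
    (hcc : IsRed (c ++ c)) (hc : c ≠ []) {s : ℕ} (hs : 1 ≤ s) :
    ((mk (u ++ c ++ invRev u) : FreeGroup α) ^ s).toWord = u ++ wpow c s ++ invRev u := by
  have hsplit : (mk (u ++ c ++ invRev u) : FreeGroup α) = mk u * mk c * (mk u)⁻¹ := by
    rw [inv_mk, mul_mk, mul_mk]
  have hpows : ((mk c : FreeGroup α) ^ s) = mk (wpow c s) := by
    rw [← mk_toWord (x := (mk c : FreeGroup α) ^ s), toWord_mk_pow hcc hc s]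
  rw [hsplit, conj_pow, hpows, inv_mk, mul_mk, mul_mk]
  exact toWord_mk_self (isRed_conjpow h hcc hc hs)

/-- For a finitely generated subgroup, there is a finite set of coset representatives
for all cosets of prefixes of reduced words of elements of `H` (the "Stallings core"). -/
theorem exists_prefix_reps (H : Subgroup (FreeGroup α)) (hFG : H.FG) :
    ∃ D : Finset (FreeGroup α), ∀ h ∈ H, ∀ p ∈ h.toWord.inits, ∃ d ∈ D, mk p * d⁻¹ ∈ H := by
  obtain ⟨S, hS⟩ := hFG
  classical
  refine ⟨insert 1 (S.biUnion fun s => (s.toWord.inits.map mk).toFinset), ?_⟩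
  intro h hh
  rw [← hS] at hh
  induction hh using Subgroup.closure_induction with
  | mem x hx =>
      intro p hp
      refine ⟨mk p, ?_, by rw [mul_inv_cancel]; exact H.one_mem⟩
      exact Finset.mem_insert_of_mem (Finset.mem_biUnion.2 ⟨x, hx, List.mem_toFinset.2
        (List.mem_map.2 ⟨p, hp, rfl⟩)⟩)
  | one =>
      intro p hp
      rw [toWord_one] at hp
      simp only [List.inits, List.mem_singleton] at hp
      refine ⟨1, Finset.mem_insert_self _ _, ?_⟩
      subst hp
      exact H.one_mem
  | mul x y hx hy ihx ihy =>
      intro p hp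
      rw [List.mem_inits] at hp
      obtain ⟨a, b, c, hxw, hyw, hxyw⟩ := exists_cancel x y
      rw [hxyw] at hp
      have hptake : p = (a ++ c).take p.length := List.prefix_iff_eq_take.1 hp
      by_cases hlen : p.length ≤ a.length
      · refine ihx p ?_
        rw [List.mem_inits, hxw]
        have hpa : p <+: a := by
          conv_lhs => rw [hptake]
          rw [List.take_append, Nat.sub_eq_zero_of_le hlen,
            List.take_zero, List.append_nil]
          exact List.take_prefix _ _
        exact hpa.trans ⟨b, rfl⟩
      · -- p = a ++ c' for a prefix c' of c
        have hp2 : a ++ c.take (p.length - a.length) = p := by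
          conv_rhs => rw [hptake]
          rw [List.take_append, List.take_of_length_le (le_of_not_ge hlen)]
        set c' := c.take (p.length - a.length) with hc'
        have hw' : invRev b ++ c' ∈ y.toWord.inits := by
          rw [List.mem_inits, hyw]
          exact ⟨c.drop (p.length - a.length), by rw [List.append_assoc, List.take_append_drop]⟩
        obtain ⟨d, hd, hmem⟩ := ihy _ hw'
        refine ⟨d, hd, ?_⟩
        have hkey : mk p = x * mk (invRev b ++ c') := by
          rw [← hp2, ← mul_mk, ← mul_mk, ← inv_mk, ← mk_toWord (x := x), hxw, ← mul_mk]
          group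
        rw [hkey, mul_assoc]
        exact H.mul_mem (hS ▸ hx) hmem
  | inv x hx ihx =>
      intro p hp
      rw [List.mem_inits, toWord_inv] at hp
      obtain ⟨t, ht⟩ := hp
      have hq : x.toWord = invRev t ++ invRev p := by
        calc x.toWord = invRev (invRev x.toWord) := (invRev_invRev).symm
          _ = invRev (p ++ t) := by rw [ht]
          _ = invRev t ++ invRev p := invRev_append _ _
      obtain ⟨d, hd, hmem⟩ := ihx (invRev t) ((List.mem_inits _ _).2 ⟨invRev p, hq.symm⟩)
      refine ⟨d, hd, ?_⟩
      have hkey : mk p = x⁻¹ * mk (invRev t) := by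
        have hx2 : x = mk (invRev t) * mk (invRev p) := by rw [mul_mk, ← hq, mk_toWord]
        rw [hx2, mul_inv_rev, mul_assoc, inv_mul_cancel, mul_one, inv_mk, invRev_invRev]
      rw [hkey, mul_assoc]
      exact H.mul_mem (H.inv_mem (hS ▸ hx)) hmem

omit [DecidableEq α] in
theorem prefix_trim {p X Y : List (α × Bool)} (h : p <+: X ++ Y) (hl : p.length ≤ X.length) :
    p <+: X := by
  have := List.prefix_iff_eq_take.1 h
  rw [List.take_append, Nat.sub_eq_zero_of_le hl, List.take_zero,
    List.append_nil] at this
  rw [this]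
  exact List.take_prefix _ _

omit [DecidableEq α] in
theorem strip_prefix {u a b : List (α × Bool)} (h : u ++ a <+: u ++ b) : a <+: b := by
  obtain ⟨t, ht⟩ := h
  rw [List.append_assoc] at ht
  exact ⟨t, List.append_cancel_left ht⟩

omit [DecidableEq α] in
theorem invRev_prefix_of_suffix {b b' : List (α × Bool)} (h : b <:+ b') :
    invRev b <+: invRev b' := by
  obtain ⟨t, rfl⟩ := h
  rw [invRev_append]
  exact ⟨invRev t, rfl⟩

omit [DecidableEq α] in
theorem take_eq_of_prefix {p q : List (α × Bool)} (h : p <+: q) {n : ℕ} (hn : n ≤ p.length) :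
    p.take n = q.take n := by
  have hh := List.prefix_iff_eq_take.1 h
  conv_lhs => rw [hh]
  rw [List.take_take, min_eq_left hn]

omit [DecidableEq α] in
theorem head?_invRev (c : List (α × Bool)) :
    (invRev c).head? = c.getLast?.map (fun p => (p.1, !p.2)) := by
  unfold invRev
  rw [List.head?_reverse, List.getLast?_map]

/-- A sufficiently long word cannot simultaneously be an `u`-shifted prefix of a power of `c`
and of a power of `invRev c`, for cyclically reduced `c`. -/
theorem no_double_periodic {u c p p' : List (α × Bool)} (hcc : IsRed (c ++ c)) (hc : c ≠ [])
    {s s' : ℕ} (hp : p <+: u ++ wpow c s) (hp' : p' <+: u ++ wpow (invRev c) s')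
    (hpp : p <+: p') (hlen : u.length + c.length < p.length) : False := by
  have hcpos : 0 < c.length := List.length_pos_of_ne_nil hc
  -- p = u ++ q
  have hup : u <+: p := by
    rcases List.prefix_or_prefix_of_prefix hp (⟨wpow c s, rfl⟩ : u <+: u ++ wpow c s) with h | h
    · have := h.length_le; omega
    · exact h
  obtain ⟨q, rfl⟩ := hup
  obtain ⟨q', rfl⟩ := List.IsPrefix.trans (⟨q, rfl⟩ : u <+: u ++ q) hpp
  have hq : q <+: wpow c s := strip_prefix hp
  have hq' : q' <+: wpow (invRev c) s' := strip_prefix hp'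
  have hqq' : q <+: q' := strip_prefix hpp
  have hqlen : c.length < q.length := by
    have := (List.length_append (as := u) (bs := q)) ▸ hlen; omega
  have hs : 1 ≤ s := by
    rcases Nat.eq_zero_or_pos s with rfl | h
    · have := hq.length_le; rw [length_wpow] at this; omega
    · exact h
  have hs' : 1 ≤ s' := by
    rcases Nat.eq_zero_or_pos s' with rfl | h
    · have h1 := hqq'.length_le
      have := hq'.length_le; rw [length_wpow] at this; omega
    · exact h
  have h1 : q.take c.length = c := by
    rw [take_eq_of_prefix hq (le_of_lt hqlen), take_wpow hs]
  have h2 : q'.take c.length = invRev c := by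
    have := take_eq_of_prefix hq' (n := (invRev c).length)
      (by rw [invRev_length]; have := hqq'.length_le; omega)
    rw [take_wpow hs'] at this
    rw [← invRev_length (L₁ := c), this]
  have h3 : q.take c.length = q'.take c.length :=
    take_eq_of_prefix hqq' (le_of_lt hqlen)
  have hceq : c = invRev c := h1.symm.trans (h3.trans h2)
  -- contradiction with cyclic reducedness
  set ℓ := c.getLast hc with hℓdef
  have hℓ : c.getLast? = some ℓ := List.getLast?_eq_getLast hc
  have hhead : c.head? = some (ℓ.1, !ℓ.2) := by
    conv_lhs => rw [hceq]
    rw [head?_invRev, hℓ]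
    rfl
  have hbd := (List.isChain_append.1 hcc).2.2 ℓ hℓ (ℓ.1, !ℓ.2) hhead
  exact hbd ⟨rfl, by simp⟩

/-- Splitting the word of `g` according to cancellation with `y` and `g⁻¹` in `g * y * g⁻¹`. -/
theorem conj_split (g y : FreeGroup α) :
    ∃ a b, g.toWord = a ++ b ∧ invRev b <+: y.toWord ∧
      (2 * g.toWord.length < y.toWord.length → a <+: (g * y * g⁻¹).toWord) := by
  obtain ⟨a, b, c, h1, h2, h3⟩ := exists_cancel g y
  refine ⟨a, b, h1, ⟨c, h2.symm⟩, ?_⟩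
  intro hlen
  obtain ⟨A, B, C, k1, k2, k3⟩ := exists_cancel (g * y) g⁻¹
  rw [h3] at k1
  have hBlen : B.length ≤ g.toWord.length := by
    have hk2 := congrArg List.length k2
    rw [toWord_inv, invRev_length, List.length_append, invRev_length] at hk2
    omega
  have hb : b.length ≤ g.toWord.length := by
    have := congrArg List.length h1
    rw [List.length_append] at this; omega
  have hc : y.toWord.length = b.length + c.length := by
    have := congrArg List.length h2
    rw [List.length_append, invRev_length] at this; omega
  have hlenA : a.length ≤ A.length := by
    have := congrArg List.length k1
    rw [List.length_append, List.length_append] at this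
    have := congrArg List.length h1
    rw [List.length_append] at this
    omega
  have haA : a <+: A := by
    rcases List.prefix_or_prefix_of_prefix (⟨c, rfl⟩ : a <+: a ++ c)
      (⟨B, k1.symm⟩ : A <+: a ++ c) with h | h
    · exact h
    · rw [h.eq_of_length_le hlenA]
  exact haA.trans ⟨C, k3.symm⟩

/-- The master lemma: an element whose conjugate kills arbitrarily large powers of `h₀` into `H`
has a coset representative consisting of a prefix of an `H`-word and a short tail. -/
theorem coset_short_rep (H : Subgroup (FreeGroup α)) {h₀ : FreeGroup α}
    {u c : List (α × Bool)} (hword : h₀.toWord = u ++ c ++ invRev u)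
    (hcne : c ≠ []) (hcc : IsRed (c ++ c)) (g : FreeGroup α)
    {n : ℕ} (hn : 1 ≤ n) (hpow : ∀ k : ℕ, g * h₀ ^ (n * k) * g⁻¹ ∈ H) :
    ∃ g₁ g₂, g.toWord = g₁ ++ g₂ ∧ (∃ h ∈ H, g₁ <+: h.toWord) ∧
      g₂.length ≤ u.length + c.length := by
  set m := g.toWord.length with hm
  set s := n * (2 * m + 1) with hs
  have hs1 : 1 ≤ s := by
    have h1 : 1 * 1 ≤ n * (2 * m + 1) := Nat.mul_le_mul hn (by omega)
    omega
  have hs2 : 2 * m + 1 ≤ s := by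
    have := Nat.mul_le_mul hn (le_refl (2 * m + 1))
    omega
  have hcpos : 0 < c.length := List.length_pos_of_ne_nil hcne
  have hsc : 2 * m < s * c.length := by
    have := Nat.mul_le_mul (le_refl s) hcpos
    omega
  have hh0 : h₀ = mk (u ++ c ++ invRev u) := by rw [← hword, mk_toWord]
  have hredw : IsRed (u ++ c ++ invRev u) := hword ▸ isRed_toWord h₀
  have hyp : (h₀ ^ s).toWord = u ++ wpow c s ++ invRev u := by
    conv_lhs => rw [hh0]
    exact toWord_conjpow hredw hcc hcne hs1
  have hinvword : (h₀⁻¹).toWord = u ++ invRev c ++ invRev u := by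
    rw [toWord_inv, hword, invRev_append, invRev_append, invRev_invRev]
    simp [List.append_assoc]
  have hinvcc : IsRed (invRev c ++ invRev c) := by
    have := isRed_invRev hcc; rwa [invRev_append] at this
  have hinvcne : invRev c ≠ [] := by
    intro h
    apply hcne
    have := congrArg List.length h
    rw [invRev_length] at this
    exact List.length_eq_zero_iff.1 this
  have hredwinv : IsRed (u ++ invRev c ++ invRev u) := hinvword ▸ isRed_toWord h₀⁻¹
  have hym : ((h₀⁻¹) ^ s).toWord = u ++ wpow (invRev c) s ++ invRev u := by
    have hh1 : h₀⁻¹ = mk (u ++ invRev c ++ invRev u) := by rw [← hinvword, mk_toWord]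
    conv_lhs => rw [hh1]
    exact toWord_conjpow hredwinv hinvcc hinvcne hs1
  have hUlen : m < (u ++ wpow c s).length := by
    rw [List.length_append, length_wpow]; omega
  have hUlen' : m < (u ++ wpow (invRev c) s).length := by
    rw [List.length_append, length_wpow, invRev_length]; omega
  have hylen : 2 * g.toWord.length < (h₀ ^ s).toWord.length := by
    rw [hyp, List.length_append, List.length_append, length_wpow, ← hm]; omega
  have hylen' : 2 * g.toWord.length < ((h₀⁻¹) ^ s).toWord.length := by
    rw [hym, List.length_append, List.length_append, length_wpow, invRev_length, ← hm]; omega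
  obtain ⟨a, b, hab, hbpre, hapre⟩ := conj_split g (h₀ ^ s)
  obtain ⟨a', b', hab', hbpre', hapre'⟩ := conj_split g ((h₀⁻¹) ^ s)
  have hble : b.length ≤ m := by
    rw [hm, hab, List.length_append]; omega
  have hble' : b'.length ≤ m := by
    rw [hm, hab', List.length_append]; omega
  have hmemp : g * h₀ ^ s * g⁻¹ ∈ H := hpow (2 * m + 1)
  have hmemm : g * (h₀⁻¹) ^ s * g⁻¹ ∈ H := by
    have heq : g * (h₀⁻¹) ^ s * g⁻¹ = (g * h₀ ^ s * g⁻¹)⁻¹ := by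
      rw [inv_pow]; group
    rw [heq]; exact H.inv_mem hmemp
  by_cases hb : b.length ≤ u.length + c.length
  · exact ⟨a, b, hab, ⟨g * h₀ ^ s * g⁻¹, hmemp, hapre hylen⟩, hb⟩
  by_cases hb' : b'.length ≤ u.length + c.length
  · exact ⟨a', b', hab', ⟨g * (h₀⁻¹) ^ s * g⁻¹, hmemm, hapre' hylen'⟩, hb'⟩
  exfalso
  push_neg at hb hb'
  have hbu : invRev b <+: u ++ wpow c s := by
    refine prefix_trim (X := u ++ wpow c s) (Y := invRev u) ?_ ?_
    · rw [← hyp]; exact hbpre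
    · rw [invRev_length]; omega
  have hbu' : invRev b' <+: u ++ wpow (invRev c) s := by
    refine prefix_trim (X := u ++ wpow (invRev c) s) (Y := invRev u) ?_ ?_
    · rw [← hym]; exact hbpre'
    · rw [invRev_length]; omega
  have hsb : b <:+ g.toWord := ⟨a, hab.symm⟩
  have hsb' : b' <:+ g.toWord := ⟨a', hab'.symm⟩
  rcases List.suffix_or_suffix_of_suffix hsb hsb' with h | h
  · exact no_double_periodic hcc hcne hbu hbu' (invRev_prefix_of_suffix h)
      (by rw [invRev_length]; omega)
  · refine no_double_periodic (s := s) (s' := s) hinvcc hinvcne hbu' ?_ (invRev_prefix_of_suffix h)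
      (by rw [invRev_length, invRev_length]; omega)
    rw [invRev_invRev]
    exact hbu

theorem freeGroup_pow_ne_one {x : FreeGroup α} (hx : x ≠ 1) {n : ℕ} (hn : 1 ≤ n) :
    x ^ n ≠ 1 := by
  obtain ⟨u, c, hw, hc, hcc⟩ := exists_cyc x.toWord (isRed_toWord x)
    (fun h => hx (toWord_eq_nil_iff.1 h))
  have hx' : x = mk (u ++ c ++ invRev u) := by rw [← hw, mk_toWord]
  have hxw : (x ^ n).toWord = u ++ wpow c n ++ invRev u := by
    conv_lhs => rw [hx']
    exact toWord_conjpow (hw ▸ isRed_toWord x) hcc hc hn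
  intro h1
  rw [h1, toWord_one] at hxw
  have hlen := congrArg List.length hxw
  rw [List.length_nil, List.length_append, List.length_append, length_wpow] at hlen
  have hcpos : 0 < c.length := List.length_pos_of_ne_nil hc
  have : 0 < n * c.length := by positivity
  omega

section Glue

open Pointwise

variable {G : Type*} [Group G]

theorem exists_pow_mem (T H : Subgroup G) (hrel : T.relIndex H ≠ 0) {x : G} (hx : x ∈ H) :
    ∃ n : ℕ, 1 ≤ n ∧ ∀ k : ℕ, x ^ (n * k) ∈ T := by
  have hfin : Finite (↥H ⧸ T.subgroupOf H) := Nat.finite_of_card_ne_zero hrel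
  have main : ∀ i j : ℕ, i < j →
      (QuotientGroup.mk ((⟨x, hx⟩ : ↥H) ^ i) : ↥H ⧸ T.subgroupOf H) =
        QuotientGroup.mk ((⟨x, hx⟩ : ↥H) ^ j) → ∃ n : ℕ, 1 ≤ n ∧ ∀ k : ℕ, x ^ (n * k) ∈ T := by
    intro i j hij hmk
    refine ⟨j - i, by omega, ?_⟩
    have h2 : (⟨x, hx⟩ : ↥H) ^ i * (⟨x, hx⟩ : ↥H) ^ (j - i) = (⟨x, hx⟩ : ↥H) ^ j := by
      rw [← pow_add]
      congr 1
      omega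
    have hmem : (⟨x, hx⟩ : ↥H) ^ (j - i) ∈ T.subgroupOf H := by
      have h3 := QuotientGroup.eq.1 hmk
      rwa [← h2, inv_mul_cancel_left] at h3
    intro k
    have h4 := Subgroup.mem_subgroupOf.1 (pow_mem hmem k)
    rw [← pow_mul] at h4
    simpa using h4
  obtain ⟨i, j, hij, hmap⟩ := Finite.exists_ne_map_eq_of_infinite
    (fun k : ℕ => (QuotientGroup.mk ((⟨x, hx⟩ : ↥H) ^ k) : ↥H ⧸ T.subgroupOf H))
  rcases hij.lt_or_gt with h | h
  · exact main _ _ h hmap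
  · exact main _ _ h hmap.symm

theorem le_commensurator_of (H K : Subgroup G) (hHK : H ≤ K) (hrel : H.relIndex K ≠ 0) :
    K ≤ Subgroup.Commensurable.commensurator H := by
  intro k hk
  rw [Subgroup.Commensurable.commensurator_mem_iff]
  have c1 : Subgroup.Commensurable H K := by
    refine ⟨hrel, ?_⟩
    rw [Subgroup.relIndex, Subgroup.subgroupOf_eq_top.2 hHK, Subgroup.index_top]
    exact one_ne_zero
  have c2 := (Subgroup.Commensurable.commensurable_conj (ConjAct.toConjAct k)).1 c1
  have c3 : (ConjAct.toConjAct k) • K = K := by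
    ext x
    rw [Subgroup.mem_pointwise_smul_iff_inv_smul_mem, ConjAct.smul_def]
    have hsm2 : ConjAct.ofConjAct (ConjAct.toConjAct k)⁻¹ = k⁻¹ := by simp
    rw [hsm2, inv_inv]
    constructor
    · intro h
      have h5 := K.mul_mem (K.mul_mem hk h) (K.inv_mem hk)
      have h6 : k * (k⁻¹ * x * k) * k⁻¹ = x := by group
      rwa [h6] at h5
    · intro h
      exact K.mul_mem (K.mul_mem (K.inv_mem hk) h) hk
  rw [c3] at c2
  exact c2.trans c1.symm

theorem conj_pow_mem_of_commensurator {H : Subgroup G} {g : G}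
    (hg : g⁻¹ ∈ Subgroup.Commensurable.commensurator H) {x : G} (hx : x ∈ H) :
    ∃ n : ℕ, 1 ≤ n ∧ ∀ k : ℕ, g * x ^ (n * k) * g⁻¹ ∈ H := by
  rw [Subgroup.Commensurable.commensurator_mem_iff] at hg
  obtain ⟨n, hn, hpow⟩ := exists_pow_mem _ _ hg.1 hx
  refine ⟨n, hn, fun k => ?_⟩
  have h1 := hpow k
  have hsm : ConjAct.ofConjAct (ConjAct.toConjAct g⁻¹)⁻¹ = g := by simp
  rw [Subgroup.mem_pointwise_smul_iff_inv_smul_mem, ConjAct.smul_def, hsm] at h1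
  exact h1

end Glue

end Greenberg

open Greenberg

theorem greenberg (r : ℕ) (H K L : Subgroup (FreeGroup (Fin r))) (hFG : H.FG)
    (hHK : H ≤ K) (hHL : H ≤ L)
    (hK : (H.subgroupOf K).index ≠ 0) (hL : (H.subgroupOf L).index ≠ 0) :
    (H.subgroupOf (K ⊔ L)).index ≠ 0 := by
  classical
  rcases H.bot_or_exists_ne_one with hbot | ⟨h₀, hh₀, hne⟩
  · subst hbot
    have trivial_of : ∀ J : Subgroup (FreeGroup (Fin r)),
        ((⊥ : Subgroup (FreeGroup (Fin r))).subgroupOf J).index ≠ 0 → J = ⊥ := by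
      intro J hJ
      rw [Subgroup.bot_subgroupOf, Subgroup.index_bot] at hJ
      have hfin : Finite ↥J := Nat.finite_of_card_ne_zero hJ
      rw [Subgroup.eq_bot_iff_forall]
      intro x hx
      by_contra hx1
      have h1 : 0 < orderOf (⟨x, hx⟩ : ↥J) := orderOf_pos _
      have h2 : (⟨x, hx⟩ : ↥J) ^ orderOf (⟨x, hx⟩ : ↥J) = 1 := pow_orderOf_eq_one _
      have h3 : x ^ orderOf (⟨x, hx⟩ : ↥J) = 1 := by
        have := congrArg (Subtype.val) h2
        simpa using this
      exact freeGroup_pow_ne_one hx1 h1 h3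
    rw [trivial_of K hK, trivial_of L hL, sup_bot_eq, Subgroup.subgroupOf_self,
      Subgroup.index_top]
    exact one_ne_zero
  · set M := K ⊔ L with hM
    have hKC : K ≤ Subgroup.Commensurable.commensurator H := le_commensurator_of H K hHK hK
    have hLC : L ≤ Subgroup.Commensurable.commensurator H := le_commensurator_of H L hHL hL
    have hMC : M ≤ Subgroup.Commensurable.commensurator H := sup_le hKC hLC
    have hHM : H ≤ M := hHK.trans le_sup_left
    obtain ⟨u, c, hw, hcne, hcc⟩ := exists_cyc h₀.toWord (isRed_toWord h₀)
      (fun h => hne (FreeGroup.toWord_eq_nil_iff.1 h))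
    obtain ⟨D, hD⟩ := exists_prefix_reps H hFG
    set E : Set (FreeGroup (Fin r)) := {e : FreeGroup (Fin r) | ∃ d ∈ D,
      ∃ t : List (Fin r × Bool), t.length ≤ u.length + c.length ∧ e = d * FreeGroup.mk t}
      with hE
    have hcover : ∀ g ∈ M, ∃ e ∈ E, g * e⁻¹ ∈ H := by
      intro g hg
      obtain ⟨n, hn, hpow⟩ := conj_pow_mem_of_commensurator (hMC (M.inv_mem hg)) hh₀
      obtain ⟨g₁, g₂, hsplit, ⟨h, hhH, hpre⟩, hlen⟩ :=
        coset_short_rep H hw hcne hcc g hn hpow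
      obtain ⟨d, hd, hmem⟩ := hD h hhH g₁ ((List.mem_inits _ _).2 hpre)
      refine ⟨d * FreeGroup.mk g₂, ⟨d, hd, g₂, hlen, rfl⟩, ?_⟩
      have hgsplit : g = FreeGroup.mk g₁ * FreeGroup.mk g₂ := by
        rw [FreeGroup.mul_mk, ← hsplit, FreeGroup.mk_toWord]
      rw [hgsplit]
      have heq : FreeGroup.mk g₁ * FreeGroup.mk g₂ * (d * FreeGroup.mk g₂)⁻¹ =
          FreeGroup.mk g₁ * d⁻¹ := by group
      rw [heq]
      exact hmem
    have hEfin : E.Finite := by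
      have h1 : {t : List (Fin r × Bool) | t.length ≤ u.length + c.length}.Finite :=
        List.finite_length_le _ _
      refine (Set.Finite.image2 (fun d t => d * FreeGroup.mk t) D.finite_toSet h1).subset ?_
      rintro e ⟨d, hd, t, ht, rfl⟩
      exact Set.mem_image2_of_mem hd ht
    have hfin : Finite (↥M ⧸ H.subgroupOf M) := by
      haveI := hEfin.to_subtype
      refine Finite.of_surjective (f := fun (e : ↥E) =>
        if h : (e : FreeGroup (Fin r))⁻¹ ∈ M then
          (QuotientGroup.mk ⟨(e : FreeGroup (Fin r))⁻¹, h⟩ : ↥M ⧸ H.subgroupOf M)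
        else QuotientGroup.mk 1) ?_
      intro q
      obtain ⟨m, rfl⟩ := QuotientGroup.mk_surjective q
      obtain ⟨e, he, hme⟩ := hcover ((m : FreeGroup (Fin r))⁻¹) (M.inv_mem m.2)
      have heM : e⁻¹ ∈ M := by
        have h4 : e⁻¹ = (m : FreeGroup (Fin r)) * ((m : FreeGroup (Fin r))⁻¹ * e⁻¹) := by group
        rw [h4]
        exact M.mul_mem m.2 (hHM hme)
      refine ⟨⟨e, he⟩, ?_⟩
      simp only [dif_pos heM]
      rw [QuotientGroup.eq]
      rw [Subgroup.mem_subgroupOf]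
      show (e⁻¹)⁻¹ * (m : FreeGroup (Fin r)) ∈ H
      have h5 : (e⁻¹)⁻¹ * (m : FreeGroup (Fin r)) = ((m : FreeGroup (Fin r))⁻¹ * e⁻¹)⁻¹ := by
        group
      rw [h5]
      exact H.inv_mem hme
    exact Subgroup.index_ne_zero_of_finite
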